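/- Let ε ∈ (0, 1), L > 0, α ∈ (0, 1), C > 0, and T₁ < T₂. Let γ : [0, L] → ℝ be continuously differentiable, and set D = {(x₁, x₂) ∈ ℝ² : 0 < x₁ < L, γ(x₁) < x₂ < γ(x₁)+ε}. Let w : D̄ × [T₁, T₂] → ℂ be continuously differentiable in (x, t) and satisfy a parabolic C^{1,α} bound with constant C, and suppose that for all x₁ ∈ [0, L] and t ∈ [T₁, T₂]: w(x₁, γ(x₁), t) = 0 and γ′(x₁)·∂₁w(x₁, γ(x₁), t) − ∂₂w(x₁, γ(x₁), t) = 0 (vanishing normal derivative along the lower graph boundary). Then ∇ₓw(x₁, γ(x₁), t) = 0 and ∂ₜw(x₁, γ(x₁), t) = 0 for all such (x₁, t), and consequently, for every (x₁, x₂, t) ∈ D̄ × [T₁, T₂]: |w(x₁, x₂, t)| ≤ C·|x₂ − γ(x₁)|^{1+α} ≤ C·ε^{1+α} and ‖∇ₓw(x₁, x₂, t)‖ ≤ C·|x₂ − γ(x₁)|^{α} ≤ C·ε^{α}. -/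

import Mathlib

noncomputable section

/-- Partial derivative in the first spatial variable. -/
def pd1 (f : ℝ → ℝ → ℝ → ℂ) (x₁ x₂ t : ℝ) : ℂ := deriv (fun y => f y x₂ t) x₁

/-- Partial derivative in the second spatial variable. -/
def pd2 (f : ℝ → ℝ → ℝ → ℂ) (x₁ x₂ t : ℝ) : ℂ := deriv (fun y => f x₁ y t) x₂

/-- Partial derivative in time. -/
def pdt (f : ℝ → ℝ → ℝ → ℂ) (x₁ x₂ t : ℝ) : ℂ := deriv (fun τ => f x₁ x₂ τ) t

/-- Spatial Laplacian `Δ = ∂₁² + ∂₂²`. -/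
def lap (f : ℝ → ℝ → ℝ → ℂ) (x₁ x₂ t : ℝ) : ℂ :=
  pd1 (pd1 f) x₁ x₂ t + pd2 (pd2 f) x₁ x₂ t

/-- The 2D complex geometric optics function
`u₀(x,t) = exp(μ^{-1/2}((s d₁ + i√(s²+λ) d₂) x₁ + (s d₂ − i√(s²+λ) d₁) x₂) + λ t)`. -/
def cgo2 (μ lam s d₁ d₂ : ℝ) (x₁ x₂ t : ℝ) : ℂ :=
  Complex.exp (((Real.sqrt μ : ℝ) : ℂ)⁻¹ *
      (((s : ℂ) * (d₁ : ℂ) + Complex.I * ((Real.sqrt (s ^ 2 + lam) : ℝ) : ℂ) * (d₂ : ℂ)) *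
          (x₁ : ℂ) +
        ((s : ℂ) * (d₂ : ℂ) - Complex.I * ((Real.sqrt (s ^ 2 + lam) : ℝ) : ℂ) * (d₁ : ℂ)) *
          (x₂ : ℂ)) +
    (lam : ℂ) * (t : ℂ))

/-- The parabolic distance `ρ = ‖x − y‖ + |t − τ|^{1/2}` in two space dimensions. -/
def prho (x₁ x₂ t y₁ y₂ τ : ℝ) : ℝ :=
  Real.sqrt ((x₁ - y₁) ^ 2 + (x₂ - y₂) ^ 2) + Real.sqrt |t - τ|

/-- Euclidean norm of the spatial gradient of `w`. -/
def gradNorm (w : ℝ → ℝ → ℝ → ℂ) (x₁ x₂ t : ℝ) : ℝ :=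
  Real.sqrt (‖pd1 w x₁ x₂ t‖ ^ 2 + ‖pd2 w x₁ x₂ t‖ ^ 2)

/-- The closed nozzle space–time cylinder
`D̄_ε × [T₁,T₂]`, `D_ε = {0 ≤ x₁ ≤ ε^l, γ(x₁) ≤ x₂ ≤ γ(x₁)+ε}`. -/
def nozzleCyl (ε l T₁ T₂ : ℝ) (γ : ℝ → ℝ) : Set (ℝ × ℝ × ℝ) :=
  {p : ℝ × ℝ × ℝ | p.1 ∈ Set.Icc 0 (ε ^ l) ∧ p.2.1 ∈ Set.Icc (γ p.1) (γ p.1 + ε) ∧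
    p.2.2 ∈ Set.Icc T₁ T₂}

/-- Parabolic `C^{1,α}` bound with constant `C` on the set `S`. -/
structure ParabolicC1 (w : ℝ → ℝ → ℝ → ℂ) (S : Set (ℝ × ℝ × ℝ)) (C α : ℝ) : Prop where
  bdd : ∀ p ∈ S, ‖w p.1 p.2.1 p.2.2‖ ≤ C
  grad_bdd : ∀ p ∈ S, gradNorm w p.1 p.2.1 p.2.2 ≤ C
  time_bdd : ∀ p ∈ S, ‖pdt w p.1 p.2.1 p.2.2‖ ≤ C
  lip : ∀ p ∈ S, ∀ q ∈ S,
    ‖w p.1 p.2.1 p.2.2 - w q.1 q.2.1 q.2.2‖ ≤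
      C * prho p.1 p.2.1 p.2.2 q.1 q.2.1 q.2.2
  grad_holder : ∀ p ∈ S, ∀ q ∈ S,
    Real.sqrt (‖pd1 w p.1 p.2.1 p.2.2 - pd1 w q.1 q.2.1 q.2.2‖ ^ 2 +
        ‖pd2 w p.1 p.2.1 p.2.2 - pd2 w q.1 q.2.1 q.2.2‖ ^ 2) ≤
      C * prho p.1 p.2.1 p.2.2 q.1 q.2.1 q.2.2 ^ α
  taylor : ∀ p ∈ S, ∀ q ∈ S,
    ‖w p.1 p.2.1 p.2.2 - w q.1 q.2.1 q.2.2
        - pd1 w q.1 q.2.1 q.2.2 * ((p.1 - q.1 : ℝ) : ℂ)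
        - pd2 w q.1 q.2.1 q.2.2 * ((p.2.1 - q.2.1 : ℝ) : ℂ)
        - pdt w q.1 q.2.1 q.2.2 * ((p.2.2 - q.2.2 : ℝ) : ℂ)‖ ≤
      C * prho p.1 p.2.1 p.2.2 q.1 q.2.1 q.2.2 ^ (1 + α)

/-- `w` is (jointly) continuously differentiable in `(x,t)` on the set `S`. -/
structure SmoothC1 (w : ℝ → ℝ → ℝ → ℂ) (S : Set (ℝ × ℝ × ℝ)) : Prop where
  cont : ContinuousOn (fun p : ℝ × ℝ × ℝ => w p.1 p.2.1 p.2.2) S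
  jdiff : ∀ p ∈ S, DifferentiableAt ℝ (fun q : ℝ × ℝ × ℝ => w q.1 q.2.1 q.2.2) p
  cont1 : ContinuousOn (fun p : ℝ × ℝ × ℝ => pd1 w p.1 p.2.1 p.2.2) S
  cont2 : ContinuousOn (fun p : ℝ × ℝ × ℝ => pd2 w p.1 p.2.1 p.2.2) S
  contt : ContinuousOn (fun p : ℝ × ℝ × ℝ => pdt w p.1 p.2.1 p.2.2) S

/-- The closed graph cylinder `D̄ × [T₁,T₂]` over `D = {0 < x₁ < L, γ(x₁) < x₂ < γ(x₁)+ε}`. -/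
def graphCyl (L ε T₁ T₂ : ℝ) (γ : ℝ → ℝ) : Set (ℝ × ℝ × ℝ) :=
  {p : ℝ × ℝ × ℝ | p.1 ∈ Set.Icc 0 L ∧ p.2.1 ∈ Set.Icc (γ p.1) (γ p.1 + ε) ∧
    p.2.2 ∈ Set.Icc T₁ T₂}


/-- A continuous function on `[a,b]` vanishing on `(a,b)` vanishes on all of `[a,b]`. -/
lemma zero_on_Icc_of_zero_on_Ioo {f : ℝ → ℂ} {a b : ℝ} (hab : a < b)
    (hf : ContinuousOn f (Set.Icc a b)) (h0 : ∀ x ∈ Set.Ioo a b, f x = 0) :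
    ∀ x ∈ Set.Icc a b, f x = 0 := by
  intro x hx
  have hcl : x ∈ closure (Set.Ioo a b) := by rw [closure_Ioo hab.ne]; exact hx
  have hne : (nhdsWithin x (Set.Ioo a b)).NeBot := mem_closure_iff_nhdsWithin_neBot.mp hcl
  have h1 : Filter.Tendsto f (nhdsWithin x (Set.Ioo a b)) (nhds (f x)) :=
    (hf x hx).mono Set.Ioo_subset_Icc_self
  have h2 : Filter.Tendsto f (nhdsWithin x (Set.Ioo a b)) (nhds 0) := by
    refine Filter.Tendsto.congr' ?_ tendsto_const_nhds
    filter_upwards [self_mem_nhdsWithin] with y hy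
    exact (h0 y hy).symm
  exact tendsto_nhds_unique h1 h2

lemma pd1_eq_fderiv {w : ℝ → ℝ → ℝ → ℂ} {x₁ x₂ t : ℝ}
    (h : DifferentiableAt ℝ (fun q : ℝ × ℝ × ℝ => w q.1 q.2.1 q.2.2) (x₁, x₂, t)) :
    pd1 w x₁ x₂ t = fderiv ℝ (fun q : ℝ × ℝ × ℝ => w q.1 q.2.1 q.2.2) (x₁, x₂, t) (1, 0, 0) := by
  have hc : HasDerivAt (fun y => ((y, x₂, t) : ℝ × ℝ × ℝ)) (1, 0, 0) x₁ :=
    (hasDerivAt_id x₁).prodMk ((hasDerivAt_const x₁ x₂).prodMk (hasDerivAt_const x₁ t))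
  have h2 : HasDerivAt (fun y => w y x₂ t)
      (fderiv ℝ (fun q : ℝ × ℝ × ℝ => w q.1 q.2.1 q.2.2) (x₁, x₂, t) (1, 0, 0)) x₁ :=
    by have := h.hasFDerivAt.comp_hasDerivAt x₁ hc; exact this
  exact h2.deriv

lemma pd2_eq_fderiv {w : ℝ → ℝ → ℝ → ℂ} {x₁ x₂ t : ℝ}
    (h : DifferentiableAt ℝ (fun q : ℝ × ℝ × ℝ => w q.1 q.2.1 q.2.2) (x₁, x₂, t)) :
    pd2 w x₁ x₂ t = fderiv ℝ (fun q : ℝ × ℝ × ℝ => w q.1 q.2.1 q.2.2) (x₁, x₂, t) (0, 1, 0) := by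
  have hc : HasDerivAt (fun y => ((x₁, y, t) : ℝ × ℝ × ℝ)) (0, 1, 0) x₂ :=
    (hasDerivAt_const x₂ x₁).prodMk ((hasDerivAt_id x₂).prodMk (hasDerivAt_const x₂ t))
  have h2 : HasDerivAt (fun y => w x₁ y t)
      (fderiv ℝ (fun q : ℝ × ℝ × ℝ => w q.1 q.2.1 q.2.2) (x₁, x₂, t) (0, 1, 0)) x₂ :=
    by have := h.hasFDerivAt.comp_hasDerivAt x₂ hc; exact this
  exact h2.deriv

/-- **Interior smallness estimate (eqs. (3.49)–(3.51)).**
If `w` vanishes on the lower graph boundary together with its normal derivative there,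
then its full spatial gradient and time derivative vanish on the lower boundary, and
consequently `|w| = O(|x₂ − γ(x₁)|^{1+α}) = O(ε^{1+α})` and
`‖∇ₓw‖ = O(|x₂ − γ(x₁)|^{α}) = O(ε^{α})` throughout the thin domain. -/
theorem interior_smallness
    (ε L α C T₁ T₂ : ℝ) (γ : ℝ → ℝ) (w : ℝ → ℝ → ℝ → ℂ)
    (hε : ε ∈ Set.Ioo (0:ℝ) 1) (hL : 0 < L)
    (hα : α ∈ Set.Ioo (0:ℝ) 1) (hC : 0 < C) (hT : T₁ < T₂)
    (hγ : ContDiffOn ℝ 1 γ (Set.Icc 0 L))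
    (hw : SmoothC1 w (graphCyl L ε T₁ T₂ γ))
    (hwpar : ParabolicC1 w (graphCyl L ε T₁ T₂ γ) C α)
    (hbc : ∀ x₁ ∈ Set.Icc (0:ℝ) L, ∀ t ∈ Set.Icc T₁ T₂,
      w x₁ (γ x₁) t = 0 ∧
      ((derivWithin γ (Set.Icc 0 L) x₁ : ℝ) : ℂ) * pd1 w x₁ (γ x₁) t
        - pd2 w x₁ (γ x₁) t = 0) :
    (∀ x₁ ∈ Set.Icc (0:ℝ) L, ∀ t ∈ Set.Icc T₁ T₂,
      pd1 w x₁ (γ x₁) t = 0 ∧ pd2 w x₁ (γ x₁) t = 0 ∧ pdt w x₁ (γ x₁) t = 0) ∧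
    (∀ x₁ ∈ Set.Icc (0:ℝ) L, ∀ x₂ ∈ Set.Icc (γ x₁) (γ x₁ + ε), ∀ t ∈ Set.Icc T₁ T₂,
      (‖w x₁ x₂ t‖ ≤ C * |x₂ - γ x₁| ^ (1 + α) ∧
        C * |x₂ - γ x₁| ^ (1 + α) ≤ C * ε ^ (1 + α)) ∧
      (gradNorm w x₁ x₂ t ≤ C * |x₂ - γ x₁| ^ α ∧
        C * |x₂ - γ x₁| ^ α ≤ C * ε ^ α)) := by
  obtain ⟨hε0, hε1⟩ := hε
  obtain ⟨hα0, hα1⟩ := hα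
  have hmem : ∀ x₁ ∈ Set.Icc (0:ℝ) L, ∀ t ∈ Set.Icc T₁ T₂,
      ((x₁, γ x₁, t) : ℝ × ℝ × ℝ) ∈ graphCyl L ε T₁ T₂ γ := by
    intro x₁ hx₁ t ht
    exact ⟨hx₁, ⟨le_refl _, by linarith⟩, ht⟩
  -- interior vanishing of spatial partials on the lower boundary
  have hint : ∀ t ∈ Set.Icc T₁ T₂, ∀ x₁ ∈ Set.Ioo (0:ℝ) L,
      pd1 w x₁ (γ x₁) t = 0 ∧ pd2 w x₁ (γ x₁) t = 0 := by
    intro t ht x₁ hx₁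
    have hx₁' : x₁ ∈ Set.Icc (0:ℝ) L := ⟨hx₁.1.le, hx₁.2.le⟩
    have hpS := hmem x₁ hx₁' t ht
    have hdiff := hw.jdiff _ hpS
    have hIcc : Set.Icc (0:ℝ) L ∈ nhds x₁ := Icc_mem_nhds hx₁.1 hx₁.2
    have hγd : DifferentiableAt ℝ γ x₁ :=
      ((hγ.differentiableOn one_ne_zero) x₁ hx₁').differentiableAt hIcc
    set k := deriv γ x₁ with hk
    have hcurve : HasDerivAt (fun y => ((y, γ y, t) : ℝ × ℝ × ℝ)) (1, k, 0) x₁ :=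
      (hasDerivAt_id x₁).prodMk (hγd.hasDerivAt.prodMk (hasDerivAt_const x₁ t))
    have hcomp : HasDerivAt (fun y => w y (γ y) t)
        (fderiv ℝ (fun q : ℝ × ℝ × ℝ => w q.1 q.2.1 q.2.2) (x₁, γ x₁, t) (1, k, 0)) x₁ :=
      by have := hdiff.hasFDerivAt.comp_hasDerivAt x₁ hcurve; exact this
    have hev : (fun y => w y (γ y) t) =ᶠ[nhds x₁] fun _ => (0:ℂ) := by
      filter_upwards [hIcc] with y hy
      exact (hbc y hy t ht).1
    have hz : fderiv ℝ (fun q : ℝ × ℝ × ℝ => w q.1 q.2.1 q.2.2) (x₁, γ x₁, t) (1, k, 0) = 0 := by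
      rw [← hcomp.deriv, hev.deriv_eq]
      simp
    have hsplit : ((1:ℝ), k, (0:ℝ)) = ((1:ℝ), (0:ℝ), (0:ℝ)) + k • ((0:ℝ), (1:ℝ), (0:ℝ)) := by
      simp [Prod.ext_iff]
    have hlin : pd1 w x₁ (γ x₁) t + (k : ℂ) * pd2 w x₁ (γ x₁) t = 0 := by
      rw [pd1_eq_fderiv hdiff, pd2_eq_fderiv hdiff, ← Complex.real_smul, ← map_smul,
        ← map_add, ← hsplit, hz]
    have hbc2 := (hbc x₁ hx₁' t ht).2
    have hkd : derivWithin γ (Set.Icc 0 L) x₁ = k := derivWithin_of_mem_nhds hIcc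
    rw [hkd] at hbc2
    have hA : ((1 + k ^ 2 : ℝ) : ℂ) * pd1 w x₁ (γ x₁) t = 0 := by
      push_cast
      linear_combination hlin + (k : ℂ) * hbc2
    have hAne : ((1 + k ^ 2 : ℝ) : ℂ) ≠ 0 := by
      simp only [ne_eq, Complex.ofReal_eq_zero]
      positivity
    have h1 : pd1 w x₁ (γ x₁) t = 0 := by
      rcases mul_eq_zero.mp hA with h | h
      · exact absurd h hAne
      · exact h
    refine ⟨h1, ?_⟩
    have := hbc2
    rw [h1, mul_zero, zero_sub, neg_eq_zero] at this
    exact this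
  -- boundary vanishing everywhere (by continuity), including pdt
  have hbound : ∀ x₁ ∈ Set.Icc (0:ℝ) L, ∀ t ∈ Set.Icc T₁ T₂,
      pd1 w x₁ (γ x₁) t = 0 ∧ pd2 w x₁ (γ x₁) t = 0 ∧ pdt w x₁ (γ x₁) t = 0 := by
    intro x₁ hx₁ t ht
    have hcurvecont : ContinuousOn (fun y => ((y, γ y, t) : ℝ × ℝ × ℝ)) (Set.Icc 0 L) :=
      continuousOn_id.prodMk (hγ.continuousOn.prodMk continuousOn_const)
    have hmaps : Set.MapsTo (fun y => ((y, γ y, t) : ℝ × ℝ × ℝ)) (Set.Icc 0 L)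
        (graphCyl L ε T₁ T₂ γ) := fun y hy => hmem y hy t ht
    have h1 := zero_on_Icc_of_zero_on_Ioo hL (hw.cont1.comp hcurvecont hmaps)
      (fun y hy => (hint t ht y hy).1) x₁ hx₁
    have h2 := zero_on_Icc_of_zero_on_Ioo hL (hw.cont2.comp hcurvecont hmaps)
      (fun y hy => (hint t ht y hy).2) x₁ hx₁
    have hpdt_int : ∀ τ ∈ Set.Ioo T₁ T₂, pdt w x₁ (γ x₁) τ = 0 := by
      intro τ hτ
      have hev : (fun σ => w x₁ (γ x₁) σ) =ᶠ[nhds τ] fun _ => (0:ℂ) := by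
        filter_upwards [Ioo_mem_nhds hτ.1 hτ.2] with σ hσ
        exact (hbc x₁ hx₁ σ ⟨hσ.1.le, hσ.2.le⟩).1
      show deriv (fun σ => w x₁ (γ x₁) σ) τ = 0
      rw [hev.deriv_eq]
      simp
    have hcurvet : ContinuousOn (fun τ => ((x₁, γ x₁, τ) : ℝ × ℝ × ℝ)) (Set.Icc T₁ T₂) :=
      continuousOn_const.prodMk (continuousOn_const.prodMk continuousOn_id)
    have hmapst : Set.MapsTo (fun τ => ((x₁, γ x₁, τ) : ℝ × ℝ × ℝ)) (Set.Icc T₁ T₂)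
        (graphCyl L ε T₁ T₂ γ) := fun τ hτ => hmem x₁ hx₁ τ hτ
    have h3 := zero_on_Icc_of_zero_on_Ioo hT (hw.contt.comp hcurvet hmapst) hpdt_int t ht
    exact ⟨h1, h2, h3⟩
  refine ⟨hbound, ?_⟩
  intro x₁ hx₁ x₂ hx₂ t ht
  obtain ⟨z1, z2, z3⟩ := hbound x₁ hx₁ t ht
  have hw0 := (hbc x₁ hx₁ t ht).1
  have hpS : ((x₁, x₂, t) : ℝ × ℝ × ℝ) ∈ graphCyl L ε T₁ T₂ γ := ⟨hx₁, hx₂, ht⟩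
  have hqS := hmem x₁ hx₁ t ht
  have hrho : prho x₁ x₂ t x₁ (γ x₁) t = |x₂ - γ x₁| := by
    simp [prho, sub_self, Real.sqrt_sq_eq_abs]
  have habs : |x₂ - γ x₁| ≤ ε := by
    rw [abs_of_nonneg (by linarith [hx₂.1])]
    linarith [hx₂.2]
  have htay := hwpar.taylor _ hpS _ hqS
  simp only [hw0, z1, z2, z3, zero_mul, sub_zero, mul_zero] at htay
  rw [hrho] at htay
  have hgrad := hwpar.grad_holder _ hpS _ hqS
  simp only [z1, z2, sub_zero] at hgrad
  rw [hrho] at hgrad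
  refine ⟨⟨htay, ?_⟩, ⟨hgrad, ?_⟩⟩
  · exact mul_le_mul_of_nonneg_left
      (Real.rpow_le_rpow (abs_nonneg _) habs (by linarith)) hC.le
  · exact mul_le_mul_of_nonneg_left
      (Real.rpow_le_rpow (abs_nonneg _) habs hα0.le) hC.le
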